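/- Let d, s, s* ∈ ℕ with 1 ≤ s* ≤ s < d, let 0 < c_l < c_u, and let L : ℝ^d → ℝ be differentiable and satisfy, for all β, β' ∈ ℝ^d, (c_l/2)‖β' − β‖₂² ≤ L(β') − L(β) − ⟨∇L(β), β' − β⟩ ≤ (c_u/2)‖β' − β‖₂². Suppose s ≥ 72(c_u/c_l)²·s*, and let β̂ ∈ ℝ^d have at most s* nonzero entries and β^t ∈ ℝ^d have at most s nonzero entries. Define b = β^t − (2/(3c_u))·∇L(β^t); let w_1, …, w_s ∈ ℝ^d be arbitrary noise vectors, let S^{t+1} = {j_1,…,j_s} be selected greedily (j_i maximizes |b_j| + w_i(j) over j ∉ {j_1,…,j_{i−1}}), let w̃ ∈ ℝ^d be arbitrary, and set β^{t+1} = b|_{S^{t+1}} + w̃|_{S^{t+1}} (coordinates outside S^{t+1} set to zero). Then there exist constants ρ > 0 and c₃ > 0 depending only on c_l and c_u such that L(β^{t+1}) − L(β̂) ≤ (1 − c_l/(ρ c_u))·(L(β^t) − L(β̂)) + c₃·( ∑_{i=1}^s ‖w_i‖_∞² + ‖w̃|_{S^{t+1}}‖₂² ). -/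

import Mathlib

open Finset

private lemma key_sq {x A c : ℝ} (hc : 0 ≤ c) (h : |x| ≤ A + 2*c) :
    x^2 ≤ 11/10*A^2 + 44*c^2 := by
  have h1 : |x| * |x| ≤ (A+2*c)*(A+2*c) := mul_self_le_mul_self (abs_nonneg x) h
  have h2 : |x| * |x| = x^2 := by rw [← abs_mul, abs_mul_self]; ring
  nlinarith [sq_nonneg (A - 20*c), abs_nonneg x]

section scalars
variable {c_l c_u : ℝ}

private lemma S1 (hcl : 0 < c_l) (hcu : c_l < c_u) {b G v : ℝ}
    (hb : b = 0 - 2/(3*c_u)*G) :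
    (b + v - 0)*G + c_u/2*(b + v - 0)^2 + c_l/(12*c_u)*((0 - 0)*G - c_l/2*(0 - 0)^2)
      ≤ -(3*c_u/4)*b^2 + 3*c_u/4*v^2 := by
  have h0 : 0 < c_u := hcl.trans hcu
  have hG : G = -(3*c_u/2)*b := by
    field_simp at hb; linarith
  subst hG
  nlinarith [sq_nonneg (b+v), h0.le]

private lemma S2 (hcl : 0 < c_l) (hcu : c_l < c_u) {b G v x : ℝ}
    (hb : b = 0 - 2/(3*c_u)*G) :
    (b + v - 0)*G + c_u/2*(b + v - 0)^2 + c_l/(12*c_u)*((0 - x)*G - c_l/2*(0 - x)^2)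
      ≤ -(21/32*c_u)*b^2 + 3*c_u/4*v^2 := by
  have h0 : 0 < c_u := hcl.trans hcu
  have hG : G = -(3*c_u/2)*b := by field_simp at hb; linarith
  subst hG
  rw [← sub_nonneg]
  have hid : -(21/32*c_u)*b^2 + 3*c_u/4*v^2 -
      ((b + v - 0)*(-(3*c_u/2)*b) + c_u/2*(b + v - 0)^2 +
        c_l/(12*c_u)*((0 - x)*(-(3*c_u/2)*b) - c_l/2*(0 - x)^2))
      = c_u/4*(b+v)^2 + (-(3*c_u/2)*b + c_l*x)^2/(24*c_u) := by
    field_simp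
    ring
  rw [hid]
  positivity

private lemma S2' (hcl : 0 < c_l) (hcu : c_l < c_u) {b G v x β : ℝ}
    (hb : b = β - 2/(3*c_u)*G) :
    (b + v - β)*G + c_u/2*(b + v - β)^2 + c_l/(12*c_u)*(x*G - c_l/2*x^2)
      ≤ 3*c_u/4*v^2 := by
  have h0 : 0 < c_u := hcl.trans hcu
  rw [← sub_nonneg]
  have hid : 3*c_u/4*v^2 - ((b + v - β)*G + c_u/2*(b + v - β)^2 +
      c_l/(12*c_u)*(x*G - c_l/2*x^2))
      = 7/(24*c_u)*G^2 + (2*G - 3*c_u*v)^2/(36*c_u) + (G - c_l*x)^2/(24*c_u) := by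
    rw [hb]; field_simp; ring
  rw [hid]; positivity

private lemma S3 (hcl : 0 < c_l) (hcu : c_l < c_u) {b G v β : ℝ}
    (hb : b = β - 2/(3*c_u)*G) :
    (b + v - β)*G + c_u/2*(b + v - β)^2 + c_l/(12*c_u)*(β*G - c_l/2*β^2)
      ≤ -(G^2/(6*c_u)) - c_l^2/(48*c_u)*β^2 + 3*c_u/4*v^2 := by
  have h0 : 0 < c_u := hcl.trans hcu
  rw [← sub_nonneg]
  have hid : -(G^2/(6*c_u)) - c_l^2/(48*c_u)*β^2 + 3*c_u/4*v^2 -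
      ((b + v - β)*G + c_u/2*(b + v - β)^2 + c_l/(12*c_u)*(β*G - c_l/2*β^2))
      = (G - c_l*β/4)^2/(6*c_u) + c_l^2*β^2/(96*c_u) + (2*G - 3*c_u*v)^2/(36*c_u) := by
    rw [hb]; field_simp; ring
  rw [hid]; positivity

private lemma S4 (hcl : 0 < c_l) (hcu : c_l < c_u) {b G β : ℝ}
    (hb : b = β - 2/(3*c_u)*G) :
    (0 - β)*G + c_u/2*(0 - β)^2 + c_l/(12*c_u)*(β*G - c_l/2*β^2)
      ≤ 9/16*c_u*b^2 := by
  have h0 : 0 < c_u := hcl.trans hcu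
  have hG : G = 3*c_u/2*(β - b) := by rw [hb]; field_simp; ring
  subst hG
  rw [← sub_nonneg]
  have hid : 9/16*c_u*b^2 - ((0 - β)*(3*c_u/2*(β - b)) + c_u/2*(0 - β)^2 +
      c_l/(12*c_u)*(β*(3*c_u/2*(β - b)) - c_l/2*β^2))
      = (27*c_u^2*b^2 - (72*c_u^2 - 6*c_u*c_l)*β*b + (48*c_u^2 - 6*c_u*c_l + 2*c_l^2)*β^2)/(48*c_u) := by
    field_simp; ring
  rw [hid]
  apply div_nonneg _ (by positivity)
  nlinarith [sq_nonneg (9*c_u*b - (12*c_u - c_l)*β),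
    mul_nonneg (mul_nonneg hcl.le h0.le) (sq_nonneg β),
    mul_nonneg (mul_nonneg hcl.le hcl.le) (sq_nonneg β)]

private lemma S5T (hcl : 0 < c_l) (hcu : c_l < c_u) {b G x β : ℝ}
    (hb : b = β - 2/(3*c_u)*G) :
    (0 - β)*G + c_u/2*(0 - β)^2 + c_l/(12*c_u)*(x*G - c_l/2*x^2)
      ≤ 3/5*c_u*b^2 := by
  have h0 : 0 < c_u := hcl.trans hcu
  have hG : G = 3*c_u/2*(β - b) := by rw [hb]; field_simp; ring
  subst hG
  rw [← sub_nonneg]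
  have hid : 3/5*c_u*b^2 - ((0 - β)*(3*c_u/2*(β - b)) + c_u/2*(0 - β)^2 +
      c_l/(12*c_u)*(x*(3*c_u/2*(β - b)) - c_l/2*x^2))
      = (3*c_u/2*(β - b) - c_l*x)^2/(24*c_u) + 29/32*c_u*(β - 21/29*b)^2 + 9/290*c_u*b^2 := by
    field_simp; ring
  rw [hid]; positivity

private lemma S5nT (hcl : 0 < c_l) (hcu : c_l < c_u) {b G x : ℝ}
    (hb : b = 0 - 2/(3*c_u)*G) :
    c_l/(12*c_u)*(x*G - c_l/2*x^2) ≤ 3/5*c_u*b^2 := by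
  have h0 : 0 < c_u := hcl.trans hcu
  have hG : G = -(3*c_u/2)*b := by field_simp at hb; linarith
  subst hG
  rw [← sub_nonneg]
  have hid : 3/5*c_u*b^2 - c_l/(12*c_u)*(x*(-(3*c_u/2)*b) - c_l/2*x^2)
      = (-(3*c_u/2)*b - c_l*x)^2/(24*c_u) + 81/160*c_u*b^2 := by
    field_simp; ring
  rw [hid]; positivity

private lemma SE3b (hcl : 0 < c_l) (hcu : c_l < c_u) {b G β : ℝ}
    (hb : b = β - 2/(3*c_u)*G) :
    33/3550*c_l^2*b^2 ≤ G^2/6 + c_l^2/48*β^2 := by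
  have h0 : 0 < c_u := hcl.trans hcu
  have h9 : 9*c_u^2*b^2 = (3*c_u*β - 2*G)^2 := by rw [hb]; field_simp; ring
  have hcc : c_l^2 ≤ c_u^2 := by nlinarith
  nlinarith [h9, sq_nonneg (c_l*c_u*β + c_l*G),
    mul_nonneg (sub_nonneg.2 hcc) (sq_nonneg G),
    mul_nonneg (sub_nonneg.2 hcc) (sq_nonneg β),
    sq_nonneg (c_l*G), sq_nonneg (c_u*G), mul_pos h0 h0, sq_nonneg (c_l*b)]

end scalars

set_option maxHeartbeats 2000000 in
/-- One-step progress lemma for noisy iterative hard thresholding: under restricted strong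
convexity/smoothness with parameters `c_l < c_u` and `s ≥ 72 (c_u/c_l)² s*`, one gradient
step `b = βᵗ − (2/(3c_u))∇L(βᵗ)` followed by noisy greedy selection of `s` coordinates and
addition of noise `w̃` on the selected support yields, for constants `ρ, c₃ > 0` depending
only on `c_l, c_u`,
`L(βᵗ⁺¹) − L(β̂) ≤ (1 − c_l/(ρ c_u))(L(βᵗ) − L(β̂)) + c₃(∑ᵢ‖wᵢ‖_∞² + ‖w̃|_S‖₂²)`. -/
theorem noisy_iht_progress (c_l c_u : ℝ) (hcl : 0 < c_l) (hcu : c_l < c_u) :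
    ∃ ρ c₃ : ℝ, 0 < ρ ∧ 0 < c₃ ∧
    ∀ (d s sstar : ℕ) (L : (Fin d → ℝ) → ℝ)
      (βhat βt : Fin d → ℝ) (w : Fin s → Fin d → ℝ) (wt : Fin d → ℝ)
      (jsel : Fin s → Fin d) (b βnext : Fin d → ℝ),
      1 ≤ sstar → sstar ≤ s → s < d →
      Differentiable ℝ L →
      (∀ β β' : Fin d → ℝ,
        c_l / 2 * ∑ j, (β' j - β j) ^ 2 ≤ L β' - L β - fderiv ℝ L β (β' - β)) →
      (∀ β β' : Fin d → ℝ,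
        L β' - L β - fderiv ℝ L β (β' - β) ≤ c_u / 2 * ∑ j, (β' j - β j) ^ 2) →
      (s : ℝ) ≥ 72 * (c_u / c_l) ^ 2 * (sstar : ℝ) →
      (Finset.univ.filter fun j => βhat j ≠ 0).card ≤ sstar →
      (Finset.univ.filter fun j => βt j ≠ 0).card ≤ s →
      (∀ j, b j = βt j - (2 / (3 * c_u)) * fderiv ℝ L βt (Pi.single j 1)) →
      Function.Injective jsel →
      (∀ i : Fin s, ∀ k : Fin d, (∀ i' : Fin s, i' < i → jsel i' ≠ k) →
        |b k| + w i k ≤ |b (jsel i)| + w i (jsel i)) →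
      (∀ j, βnext j =
        if j ∈ Finset.image jsel Finset.univ then b j + wt j else 0) →
      L βnext - L βhat ≤
        (1 - c_l / (ρ * c_u)) * (L βt - L βhat) +
          c₃ * ((∑ i, (⨆ j, |w i j|) ^ 2) +
            ∑ j ∈ Finset.image jsel Finset.univ, (wt j) ^ 2) := by
  classical
  have h0 : 0 < c_u := hcl.trans hcu
  refine ⟨12, 26*c_u, by norm_num, by positivity, ?_⟩
  intro d s sstar L βhat βt w wt jsel b βnext hs1 hss hsd _hdiff hlow hup h72 hbhat hbt hbdef hinj hgreedy hbnext
  haveI : Nonempty (Fin d) := ⟨⟨0, by omega⟩⟩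
  set G : Fin d → ℝ := fun j => fderiv ℝ L βt (Pi.single j 1) with hGdef
  set I : Finset (Fin d) := Finset.image jsel Finset.univ with hIdef
  set T : Finset (Fin d) := Finset.univ.filter (fun j => βt j ≠ 0) with hTdef
  set S : Finset (Fin d) := Finset.univ.filter (fun j => βhat j ≠ 0) with hSdef
  set nw : Fin s → ℝ := fun i => ⨆ j, |w i j| with hnwdef
  have hbj : ∀ j, b j = βt j - 2/(3*c_u)*G j := by
    intro j; exact hbdef j
  have hnext_in : ∀ j, j ∈ I → βnext j = b j + wt j := by
    intro j hj; rw [hbnext j, if_pos (hIdef ▸ hj)]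
  have hnext_out : ∀ j, j ∉ I → βnext j = 0 := by
    intro j hj; rw [hbnext j, if_neg (fun h => hj (hIdef ▸ h))]
  have hT0 : ∀ j, j ∉ T → βt j = 0 := by
    intro j hj; by_contra h
    exact hj (by rw [hTdef]; simp [h])
  have hS0 : ∀ j, j ∉ S → βhat j = 0 := by
    intro j hj; by_contra h
    exact hj (by rw [hSdef]; simp [h])
  have hfd : ∀ v : Fin d → ℝ, fderiv ℝ L βt v = ∑ j, v j * G j := by
    intro v
    have hv : v = ∑ j, v j • (Pi.single j 1 : Fin d → ℝ) := by
      funext k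
      rw [Finset.sum_apply]
      simp [Pi.single_apply]
    conv_lhs => rw [hv]
    rw [map_sum]
    simp [smul_eq_mul]
    rfl
  have hDesc : L βnext - L βt ≤
      ∑ j, ((βnext j - βt j) * G j + c_u/2*(βnext j - βt j)^2) := by
    have h := hup βt βnext
    rw [hfd (βnext - βt)] at h
    have h2 : ∑ j, (βnext - βt) j * G j = ∑ j, (βnext j - βt j) * G j := by
      apply Finset.sum_congr rfl; intro j _; rw [Pi.sub_apply]
    rw [h2] at h
    have h3 : ∑ j, ((βnext j - βt j) * G j + c_u/2*(βnext j - βt j)^2)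
        = (∑ j, (βnext j - βt j) * G j) + c_u/2 * ∑ j, (βnext j - βt j)^2 := by
      rw [Finset.mul_sum, ← Finset.sum_add_distrib]
    rw [h3]
    linarith
  have hDD : L βt - L βhat ≤
      ∑ j, ((βt j - βhat j) * G j - c_l/2*(βt j - βhat j)^2) := by
    have h := hlow βt βhat
    rw [hfd (βhat - βt)] at h
    have h2 : ∑ j, (βhat - βt) j * G j = -∑ j, (βt j - βhat j) * G j := by
      rw [← Finset.sum_neg_distrib]
      apply Finset.sum_congr rfl; intro j _; rw [Pi.sub_apply]; ring
    have h2' : ∑ j, (βhat j - βt j)^2 = ∑ j, (βt j - βhat j)^2 := by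
      apply Finset.sum_congr rfl; intro j _; ring
    rw [h2, h2'] at h
    have h3 : ∑ j, ((βt j - βhat j) * G j - c_l/2*(βt j - βhat j)^2)
        = (∑ j, (βt j - βhat j) * G j) - c_l/2 * ∑ j, (βt j - βhat j)^2 := by
      rw [Finset.mul_sum, ← Finset.sum_sub_distrib]
    rw [h3]
    linarith
  set φ : Fin d → ℝ := fun j =>
    ((βnext j - βt j) * G j + c_u/2*(βnext j - βt j)^2) +
      c_l/(12*c_u)*((βt j - βhat j) * G j - c_l/2*(βt j - βhat j)^2) with hφdef
  have hMain : ∑ j, φ j ≤ 26*c_u*((∑ i, nw i ^ 2) + ∑ j ∈ I, (wt j)^2) := by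
    -- noise facts
    have hnwle : ∀ (i : Fin s) (k : Fin d), |w i k| ≤ nw i := fun i k =>
      le_ciSup (Set.Finite.bddAbove (Set.finite_range (fun j => |w i j|))) k
    have hnw0 : ∀ i, 0 ≤ nw i := fun i => (abs_nonneg _).trans (hnwle i ⟨0, by omega⟩)
    have hW0 : (0:ℝ) ≤ ∑ i, nw i ^ 2 := Finset.sum_nonneg fun i _ => sq_nonneg _
    -- greedy selection quantitative consequence
    have hkey2 : ∀ j, j ∉ I → ∀ i, (b j)^2 ≤ 11/10*(b (jsel i))^2 + 44*(nw i)^2 := by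
      intro j hj i
      have hne : ∀ i' : Fin s, i' < i → jsel i' ≠ j := by
        intro i' _ he
        exact hj (by rw [hIdef]; exact Finset.mem_image.mpr ⟨i', Finset.mem_univ _, he⟩)
      have h := hgreedy i j hne
      have h1 := hnwle i j
      have h2 := hnwle i (jsel i)
      have habs : |b j| ≤ |b (jsel i)| + 2 * nw i := by
        have h3 := le_abs_self (w i (jsel i))
        have h4 := neg_abs_le (w i j)
        linarith
      have hkk := key_sq (hnw0 i) habs
      rwa [sq_abs] at hkk
    -- averaging bound
    have havg : ∀ (Y : Finset (Fin d)) (Q : Finset (Fin s)), (∀ j ∈ Y, j ∉ I) →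
        (Q.card : ℝ) * ∑ j ∈ Y, (b j)^2 ≤
          (Y.card : ℝ) * ∑ i ∈ Q, (11/10*(b (jsel i))^2 + 44*(nw i)^2) := by
      intro Y Q hY
      have e1 : (Q.card : ℝ) * ∑ j ∈ Y, (b j)^2 = ∑ j ∈ Y, ∑ _i ∈ Q, (b j)^2 := by
        rw [Finset.mul_sum]
        exact Finset.sum_congr rfl fun j _ => by rw [Finset.sum_const, nsmul_eq_mul]
      have e2 : ∑ _j ∈ Y, ∑ i ∈ Q, (11/10*(b (jsel i))^2 + 44*(nw i)^2)
          = (Y.card : ℝ) * ∑ i ∈ Q, (11/10*(b (jsel i))^2 + 44*(nw i)^2) := by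
        rw [Finset.sum_const, nsmul_eq_mul]
      rw [e1, ← e2]
      exact Finset.sum_le_sum fun j hj => Finset.sum_le_sum fun i _ => hkey2 j (hY j hj) i
    -- image of preimage filters
    have himg : ∀ (p : Fin d → Prop) [DecidablePred p],
        (Finset.univ.filter (fun i => p (jsel i))).image jsel = I.filter p := by
      intro p _
      ext j
      constructor
      · intro hj
        obtain ⟨i, hi, rfl⟩ := Finset.mem_image.mp hj
        simp only [Finset.mem_filter, Finset.mem_univ, true_and] at hi
        refine Finset.mem_filter.mpr ⟨?_, hi⟩
        rw [hIdef]; exact Finset.mem_image.mpr ⟨i, Finset.mem_univ _, rfl⟩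
      · intro hj
        obtain ⟨hjI, hp⟩ := Finset.mem_filter.mp hj
        rw [hIdef] at hjI
        obtain ⟨i, _, rfl⟩ := Finset.mem_image.mp hjI
        exact Finset.mem_image.mpr ⟨i, Finset.mem_filter.mpr ⟨Finset.mem_univ _, hp⟩, rfl⟩
    have hsum_pre : ∀ (p : Fin d → Prop) [DecidablePred p],
        ∑ i ∈ Finset.univ.filter (fun i => p (jsel i)), (b (jsel i))^2
          = ∑ j ∈ I.filter p, (b j)^2 := by
      intro p _
      rw [← himg p, Finset.sum_image (fun x _ y _ h => hinj h)]
    have hcard_pre : ∀ (p : Fin d → Prop) [DecidablePred p],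
        (Finset.univ.filter (fun i => p (jsel i))).card = (I.filter p).card := by
      intro p _
      rw [← himg p, Finset.card_image_of_injective _ hinj]
    -- splitting helper
    have hsplitP : ∀ (f : Fin d → ℝ) (p q : Fin d → Prop) [DecidablePred p] [DecidablePred q],
        ∑ j ∈ Finset.univ.filter p, f j =
          ∑ j ∈ Finset.univ.filter (fun j => p j ∧ q j), f j +
          ∑ j ∈ Finset.univ.filter (fun j => p j ∧ ¬ q j), f j := by
      intro f p q _ _
      rw [← Finset.sum_filter_add_sum_filter_not (Finset.univ.filter p) q f,
        Finset.filter_filter, Finset.filter_filter]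
    -- class sets
    set E2' := Finset.univ.filter (fun j => (j ∈ I ∧ j ∈ S) ∧ j ∈ T) with hE2'
    set E2 := Finset.univ.filter (fun j => (j ∈ I ∧ j ∈ S) ∧ ¬ j ∈ T) with hE2
    set E3 := Finset.univ.filter (fun j => (j ∈ I ∧ ¬ j ∈ S) ∧ j ∈ T) with hE3
    set E1 := Finset.univ.filter (fun j => (j ∈ I ∧ ¬ j ∈ S) ∧ ¬ j ∈ T) with hE1
    set E5T := Finset.univ.filter (fun j => ((¬ j ∈ I) ∧ j ∈ S) ∧ j ∈ T) with hE5T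
    set E5n := Finset.univ.filter (fun j => ((¬ j ∈ I) ∧ j ∈ S) ∧ ¬ j ∈ T) with hE5n
    set E4 := Finset.univ.filter (fun j => ((¬ j ∈ I) ∧ ¬ j ∈ S) ∧ j ∈ T) with hE4
    set E0 := Finset.univ.filter (fun j => ((¬ j ∈ I) ∧ ¬ j ∈ S) ∧ ¬ j ∈ T) with hE0
    -- full split of a sum over univ
    have hsplit_all : ∀ f : Fin d → ℝ, ∑ j, f j =
        ((∑ j ∈ E2', f j + ∑ j ∈ E2, f j) + (∑ j ∈ E3, f j + ∑ j ∈ E1, f j)) +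
        (((∑ j ∈ E5T, f j + ∑ j ∈ E5n, f j) + (∑ j ∈ E4, f j + ∑ j ∈ E0, f j))) := by
      intro f
      have t0 : ∑ j, f j = ∑ j ∈ Finset.univ.filter (fun j => j ∈ I), f j
          + ∑ j ∈ Finset.univ.filter (fun j => ¬ j ∈ I), f j :=
        (Finset.sum_filter_add_sum_filter_not Finset.univ (fun j => j ∈ I) f).symm
      rw [t0, hsplitP f (fun j => j ∈ I) (fun j => j ∈ S),
        hsplitP f (fun j => ¬ j ∈ I) (fun j => j ∈ S),
        hsplitP f (fun j => j ∈ I ∧ j ∈ S) (fun j => j ∈ T),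
        hsplitP f (fun j => j ∈ I ∧ ¬ j ∈ S) (fun j => j ∈ T),
        hsplitP f (fun j => (¬ j ∈ I) ∧ j ∈ S) (fun j => j ∈ T),
        hsplitP f (fun j => (¬ j ∈ I) ∧ ¬ j ∈ S) (fun j => j ∈ T),
        ← hE2', ← hE2, ← hE3, ← hE1, ← hE5T, ← hE5n, ← hE4, ← hE0]
    -- class bounds
    have hB2' : ∑ j ∈ E2', φ j ≤ 3*c_u/4*(∑ j ∈ E2', (wt j)^2) := by
      have h : ∀ j ∈ E2', φ j ≤ 3*c_u/4*(wt j)^2 := by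
        intro j hj
        rw [hE2'] at hj
        simp only [Finset.mem_filter, Finset.mem_univ, true_and] at hj
        obtain ⟨⟨hjI, _⟩, _⟩ := hj
        have hφj : φ j = (b j + wt j - βt j)*G j + c_u/2*(b j + wt j - βt j)^2 +
            c_l/(12*c_u)*((βt j - βhat j)*G j - c_l/2*(βt j - βhat j)^2) := by
          simp only [hφdef]; rw [hnext_in j hjI]
        rw [hφj]
        exact S2' hcl hcu (hbj j)
      calc ∑ j ∈ E2', φ j ≤ ∑ j ∈ E2', 3*c_u/4*(wt j)^2 := Finset.sum_le_sum h
        _ = 3*c_u/4*(∑ j ∈ E2', (wt j)^2) := by rw [← Finset.mul_sum]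
    have hB2 : ∑ j ∈ E2, φ j ≤ -(21/32*c_u)*(∑ j ∈ E2, (b j)^2)
        + 3*c_u/4*(∑ j ∈ E2, (wt j)^2) := by
      have h : ∀ j ∈ E2, φ j ≤ -(21/32*c_u)*(b j)^2 + 3*c_u/4*(wt j)^2 := by
        intro j hj
        rw [hE2] at hj
        simp only [Finset.mem_filter, Finset.mem_univ, true_and] at hj
        obtain ⟨⟨hjI, _⟩, hjT⟩ := hj
        have h2 := hT0 j hjT
        have hb0 : b j = 0 - 2/(3*c_u)*(G j) := by rw [hbj j, h2]
        have hφj : φ j = (b j + wt j - 0)*G j + c_u/2*(b j + wt j - 0)^2 +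
            c_l/(12*c_u)*((0 - βhat j)*G j - c_l/2*(0 - βhat j)^2) := by
          simp only [hφdef]; rw [hnext_in j hjI, h2]
        rw [hφj]
        exact S2 hcl hcu hb0
      calc ∑ j ∈ E2, φ j ≤ ∑ j ∈ E2, (-(21/32*c_u)*(b j)^2 + 3*c_u/4*(wt j)^2) :=
            Finset.sum_le_sum h
        _ = -(21/32*c_u)*(∑ j ∈ E2, (b j)^2) + 3*c_u/4*(∑ j ∈ E2, (wt j)^2) := by
            rw [Finset.sum_add_distrib, ← Finset.mul_sum, ← Finset.mul_sum]
    have hB3 : ∑ j ∈ E3, φ j ≤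
        -(∑ j ∈ E3, ((G j)^2/(6*c_u) + c_l^2/(48*c_u)*(βt j)^2))
        + 3*c_u/4*(∑ j ∈ E3, (wt j)^2) := by
      have h : ∀ j ∈ E3, φ j ≤
          -((G j)^2/(6*c_u) + c_l^2/(48*c_u)*(βt j)^2) + 3*c_u/4*(wt j)^2 := by
        intro j hj
        rw [hE3] at hj
        simp only [Finset.mem_filter, Finset.mem_univ, true_and] at hj
        obtain ⟨⟨hjI, hjS⟩, _⟩ := hj
        have h3 := hS0 j hjS
        have hφj : φ j = (b j + wt j - βt j)*G j + c_u/2*(b j + wt j - βt j)^2 +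
            c_l/(12*c_u)*((βt j)*G j - c_l/2*(βt j)^2) := by
          simp only [hφdef]; rw [hnext_in j hjI, h3]; ring
        rw [hφj]
        have := S3 (v := wt j) hcl hcu (hbj j)
        linarith
      calc ∑ j ∈ E3, φ j ≤
            ∑ j ∈ E3, (-((G j)^2/(6*c_u) + c_l^2/(48*c_u)*(βt j)^2) + 3*c_u/4*(wt j)^2) :=
            Finset.sum_le_sum h
        _ = -(∑ j ∈ E3, ((G j)^2/(6*c_u) + c_l^2/(48*c_u)*(βt j)^2))
            + 3*c_u/4*(∑ j ∈ E3, (wt j)^2) := by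
            rw [Finset.sum_add_distrib, Finset.sum_neg_distrib, ← Finset.mul_sum]
    have hB1 : ∑ j ∈ E1, φ j ≤ -(3*c_u/4)*(∑ j ∈ E1, (b j)^2)
        + 3*c_u/4*(∑ j ∈ E1, (wt j)^2) := by
      have h : ∀ j ∈ E1, φ j ≤ -(3*c_u/4)*(b j)^2 + 3*c_u/4*(wt j)^2 := by
        intro j hj
        rw [hE1] at hj
        simp only [Finset.mem_filter, Finset.mem_univ, true_and] at hj
        obtain ⟨⟨hjI, hjS⟩, hjT⟩ := hj
        have h2 := hT0 j hjT
        have h3 := hS0 j hjS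
        have hb0 : b j = 0 - 2/(3*c_u)*(G j) := by rw [hbj j, h2]
        have hφj : φ j = (b j + wt j - 0)*G j + c_u/2*(b j + wt j - 0)^2 +
            c_l/(12*c_u)*((0 - 0)*G j - c_l/2*(0 - 0)^2) := by
          simp only [hφdef]; rw [hnext_in j hjI, h2, h3]
        rw [hφj]
        exact S1 hcl hcu hb0
      calc ∑ j ∈ E1, φ j ≤ ∑ j ∈ E1, (-(3*c_u/4)*(b j)^2 + 3*c_u/4*(wt j)^2) :=
            Finset.sum_le_sum h
        _ = -(3*c_u/4)*(∑ j ∈ E1, (b j)^2) + 3*c_u/4*(∑ j ∈ E1, (wt j)^2) := by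
            rw [Finset.sum_add_distrib, ← Finset.mul_sum, ← Finset.mul_sum]
    have hB5T : ∑ j ∈ E5T, φ j ≤ 3/5*c_u*(∑ j ∈ E5T, (b j)^2) := by
      have h : ∀ j ∈ E5T, φ j ≤ 3/5*c_u*(b j)^2 := by
        intro j hj
        rw [hE5T] at hj
        simp only [Finset.mem_filter, Finset.mem_univ, true_and] at hj
        obtain ⟨⟨hjI, _⟩, _⟩ := hj
        have hφj : φ j = (0 - βt j)*G j + c_u/2*(0 - βt j)^2 +
            c_l/(12*c_u)*((βt j - βhat j)*G j - c_l/2*(βt j - βhat j)^2) := by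
          simp only [hφdef]; rw [hnext_out j hjI]
        rw [hφj]
        exact S5T hcl hcu (hbj j)
      calc ∑ j ∈ E5T, φ j ≤ ∑ j ∈ E5T, 3/5*c_u*(b j)^2 := Finset.sum_le_sum h
        _ = 3/5*c_u*(∑ j ∈ E5T, (b j)^2) := by rw [← Finset.mul_sum]
    have hB5n : ∑ j ∈ E5n, φ j ≤ 3/5*c_u*(∑ j ∈ E5n, (b j)^2) := by
      have h : ∀ j ∈ E5n, φ j ≤ 3/5*c_u*(b j)^2 := by
        intro j hj
        rw [hE5n] at hj
        simp only [Finset.mem_filter, Finset.mem_univ, true_and] at hj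
        obtain ⟨⟨hjI, _⟩, hjT⟩ := hj
        have h2 := hT0 j hjT
        have hb0 : b j = 0 - 2/(3*c_u)*(G j) := by rw [hbj j, h2]
        have hφj : φ j = c_l/(12*c_u)*((0 - βhat j)*G j - c_l/2*(0 - βhat j)^2) := by
          simp only [hφdef]; rw [hnext_out j hjI, h2]; ring
        rw [hφj]
        exact S5nT hcl hcu hb0
      calc ∑ j ∈ E5n, φ j ≤ ∑ j ∈ E5n, 3/5*c_u*(b j)^2 := Finset.sum_le_sum h
        _ = 3/5*c_u*(∑ j ∈ E5n, (b j)^2) := by rw [← Finset.mul_sum]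
    have hB4 : ∑ j ∈ E4, φ j ≤ 9/16*c_u*(∑ j ∈ E4, (b j)^2) := by
      have h : ∀ j ∈ E4, φ j ≤ 9/16*c_u*(b j)^2 := by
        intro j hj
        rw [hE4] at hj
        simp only [Finset.mem_filter, Finset.mem_univ, true_and] at hj
        obtain ⟨⟨hjI, hjS⟩, _⟩ := hj
        have h3 := hS0 j hjS
        have hφj : φ j = (0 - βt j)*G j + c_u/2*(0 - βt j)^2 +
            c_l/(12*c_u)*((βt j)*G j - c_l/2*(βt j)^2) := by
          simp only [hφdef]; rw [hnext_out j hjI, h3]; ring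
        rw [hφj]
        exact S4 hcl hcu (hbj j)
      calc ∑ j ∈ E4, φ j ≤ ∑ j ∈ E4, 9/16*c_u*(b j)^2 := Finset.sum_le_sum h
        _ = 9/16*c_u*(∑ j ∈ E4, (b j)^2) := by rw [← Finset.mul_sum]
    have hB0 : ∑ j ∈ E0, φ j = 0 := by
      apply Finset.sum_eq_zero
      intro j hj
      rw [hE0] at hj
      simp only [Finset.mem_filter, Finset.mem_univ, true_and] at hj
      obtain ⟨⟨hjI, hjS⟩, hjT⟩ := hj
      have h2 := hT0 j hjT
      have h3 := hS0 j hjS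
      simp only [hφdef]
      rw [hnext_out j hjI, h2, h3]
      ring
    -- set identities
    have hIT : ∑ j ∈ I.filter (fun j => ¬ j ∈ T), (b j)^2
        = ∑ j ∈ E2, (b j)^2 + ∑ j ∈ E1, (b j)^2 := by
      have hset : I.filter (fun j => ¬ j ∈ T) = Finset.univ.filter (fun j => j ∈ I ∧ ¬ j ∈ T) := by
        ext j; simp only [Finset.mem_filter, Finset.mem_univ, true_and]
      rw [hset, hsplitP (fun j => (b j)^2) (fun j => j ∈ I ∧ ¬ j ∈ T) (fun j => j ∈ S)]
      have e2eq : Finset.univ.filter (fun j => (j ∈ I ∧ ¬ j ∈ T) ∧ j ∈ S) = E2 := by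
        rw [hE2]; ext j; simp only [Finset.mem_filter, Finset.mem_univ, true_and]; tauto
      have e1eq : Finset.univ.filter (fun j => (j ∈ I ∧ ¬ j ∈ T) ∧ ¬ j ∈ S) = E1 := by
        rw [hE1]; ext j; simp only [Finset.mem_filter, Finset.mem_univ, true_and]; tauto
      rw [e2eq, e1eq]
    have hIS : ∑ j ∈ I.filter (fun j => ¬ j ∈ S), (b j)^2
        = ∑ j ∈ E3, (b j)^2 + ∑ j ∈ E1, (b j)^2 := by
      have hset : I.filter (fun j => ¬ j ∈ S) = Finset.univ.filter (fun j => j ∈ I ∧ ¬ j ∈ S) := by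
        ext j; simp only [Finset.mem_filter, Finset.mem_univ, true_and]
      rw [hset, hsplitP (fun j => (b j)^2) (fun j => j ∈ I ∧ ¬ j ∈ S) (fun j => j ∈ T),
        ← hE3, ← hE1]
    have hVs : ∑ j ∈ E2', (wt j)^2 + ∑ j ∈ E2, (wt j)^2 +
        (∑ j ∈ E3, (wt j)^2 + ∑ j ∈ E1, (wt j)^2) = ∑ j ∈ I, (wt j)^2 := by
      have hIuniv : I = Finset.univ.filter (fun j => j ∈ I) := by ext j; simp
      conv_rhs => rw [hIuniv]
      rw [hsplitP (fun j => (wt j)^2) (fun j => j ∈ I) (fun j => j ∈ S),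
        hsplitP (fun j => (wt j)^2) (fun j => j ∈ I ∧ j ∈ S) (fun j => j ∈ T),
        hsplitP (fun j => (wt j)^2) (fun j => j ∈ I ∧ ¬ j ∈ S) (fun j => j ∈ T),
        ← hE2', ← hE2, ← hE3, ← hE1]
    -- cardinalities
    have hIcard : I.card = s := by
      rw [hIdef, Finset.card_image_of_injective _ hinj, Finset.card_univ, Fintype.card_fin]
    have hE4card : E4.card ≤ (I.filter (fun j => ¬ j ∈ T)).card := by
      have hsub : E4 ⊆ T.filter (fun j => ¬ j ∈ I) := by
        intro j hj
        rw [hE4] at hj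
        simp only [Finset.mem_filter, Finset.mem_univ, true_and] at hj
        exact Finset.mem_filter.mpr ⟨hj.2, hj.1.1⟩
      have hc0 := Finset.card_le_card hsub
      have c1 := Finset.card_filter_add_card_filter_not
        (s := T) (p := fun j => j ∈ I)
      have c2 := Finset.card_filter_add_card_filter_not
        (s := I) (p := fun j => j ∈ T)
      have c3 : T.filter (fun j => j ∈ I) = I.filter (fun j => j ∈ T) := by
        ext j; simp only [Finset.mem_filter]; tauto
      rw [c3] at c1
      omega
    -- the E4 averaging bound
    have hA4 : ∑ j ∈ E4, (b j)^2 ≤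
        11/10*(∑ j ∈ E2, (b j)^2 + ∑ j ∈ E1, (b j)^2) + 44*(∑ i, nw i ^ 2) := by
      have hpre4 : ∑ i ∈ Finset.univ.filter (fun i => ¬ jsel i ∈ T), (b (jsel i))^2
          = ∑ j ∈ I.filter (fun j => ¬ j ∈ T), (b j)^2 := hsum_pre (fun j => ¬ j ∈ T)
      have hcard4 : (Finset.univ.filter (fun i => ¬ jsel i ∈ T)).card
          = (I.filter (fun j => ¬ j ∈ T)).card := hcard_pre (fun j => ¬ j ∈ T)
      have hmem4 : ∀ j ∈ E4, j ∉ I := by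
        intro j hj
        rw [hE4] at hj
        simp only [Finset.mem_filter, Finset.mem_univ, true_and] at hj
        exact hj.1.1
      have h := havg E4 (Finset.univ.filter (fun i => ¬ jsel i ∈ T)) hmem4
      have hR0 : (0:ℝ) ≤ ∑ i ∈ Finset.univ.filter (fun i => ¬ jsel i ∈ T),
          (11/10*(b (jsel i))^2 + 44*(nw i)^2) :=
        Finset.sum_nonneg fun i _ => by positivity
      have hRsplit : ∑ i ∈ Finset.univ.filter (fun i => ¬ jsel i ∈ T),
          (11/10*(b (jsel i))^2 + 44*(nw i)^2)
          = 11/10*(∑ i ∈ Finset.univ.filter (fun i => ¬ jsel i ∈ T), (b (jsel i))^2)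
            + 44*(∑ i ∈ Finset.univ.filter (fun i => ¬ jsel i ∈ T), nw i ^ 2) := by
        rw [Finset.sum_add_distrib, ← Finset.mul_sum, ← Finset.mul_sum]
      have hQnw : ∑ i ∈ Finset.univ.filter (fun i => ¬ jsel i ∈ T), nw i ^ 2
          ≤ ∑ i, nw i ^ 2 :=
        Finset.sum_le_sum_of_subset_of_nonneg (Finset.filter_subset _ _)
          (fun i _ _ => sq_nonneg _)
      have hRle : ∑ i ∈ Finset.univ.filter (fun i => ¬ jsel i ∈ T),
          (11/10*(b (jsel i))^2 + 44*(nw i)^2)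
          ≤ 11/10*(∑ j ∈ E2, (b j)^2 + ∑ j ∈ E1, (b j)^2) + 44*(∑ i, nw i ^ 2) := by
        rw [hRsplit, hpre4, hIT]
        linarith
      rcases Nat.eq_zero_or_pos (Finset.univ.filter (fun i => ¬ jsel i ∈ T)).card with hq0 | hqpos
      · have hE40 : E4.card = 0 := by omega
        have : E4 = ∅ := Finset.card_eq_zero.mp hE40
        rw [this]
        simp only [Finset.sum_empty]
        have : (0:ℝ) ≤ 11/10*(∑ j ∈ E2, (b j)^2 + ∑ j ∈ E1, (b j)^2) + 44*(∑ i, nw i ^ 2) := by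
          have h1 : (0:ℝ) ≤ ∑ j ∈ E2, (b j)^2 := Finset.sum_nonneg fun j _ => sq_nonneg _
          have h2 : (0:ℝ) ≤ ∑ j ∈ E1, (b j)^2 := Finset.sum_nonneg fun j _ => sq_nonneg _
          linarith
        linarith
      · have hcast : (E4.card : ℝ) ≤ ((Finset.univ.filter (fun i => ¬ jsel i ∈ T)).card : ℝ) := by
          exact_mod_cast hcard4 ▸ hE4card
        have h2 := h.trans (mul_le_mul_of_nonneg_right hcast hR0)
        have h3 := le_of_mul_le_mul_left h2 (by exact_mod_cast hqpos)
        exact h3.trans hRle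
    -- E5 averaging bound with the kappa^2 gain
    have hE5sum : ∑ j ∈ Finset.univ.filter (fun j => (¬ j ∈ I) ∧ j ∈ S), (b j)^2
        = ∑ j ∈ E5T, (b j)^2 + ∑ j ∈ E5n, (b j)^2 := by
      rw [hsplitP (fun j => (b j)^2) (fun j => (¬ j ∈ I) ∧ j ∈ S) (fun j => j ∈ T),
        ← hE5T, ← hE5n]
    have hA5 : ∑ j ∈ E5T, (b j)^2 + ∑ j ∈ E5n, (b j)^2 ≤
        c_l^2/(71*c_u^2)*(11/10*(∑ j ∈ E3, (b j)^2 + ∑ j ∈ E1, (b j)^2)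
          + 44*(∑ i, nw i ^ 2)) := by
      have hpre5 : ∑ i ∈ Finset.univ.filter (fun i => ¬ jsel i ∈ S), (b (jsel i))^2
          = ∑ j ∈ I.filter (fun j => ¬ j ∈ S), (b j)^2 := hsum_pre (fun j => ¬ j ∈ S)
      have hcard5 : (Finset.univ.filter (fun i => jsel i ∈ S)).card
          = (I.filter (fun j => j ∈ S)).card := hcard_pre (fun j => j ∈ S)
      have hcard5b : (I.filter (fun j => j ∈ S)).card ≤ sstar := by
        refine le_trans (Finset.card_le_card ?_) hbhat
        intro j hj; exact (Finset.mem_filter.mp hj).2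
      have hcardQ : s ≤ (Finset.univ.filter (fun i => ¬ jsel i ∈ S)).card + sstar := by
        have hcc := Finset.card_filter_add_card_filter_not
          (s := (Finset.univ : Finset (Fin s))) (p := fun i => jsel i ∈ S)
        have hcu' : (Finset.univ : Finset (Fin s)).card = s := by
          rw [Finset.card_univ, Fintype.card_fin]
        omega
      have hmem5 : ∀ j ∈ Finset.univ.filter (fun j => (¬ j ∈ I) ∧ j ∈ S), j ∉ I := by
        intro j hj
        simp only [Finset.mem_filter, Finset.mem_univ, true_and] at hj
        exact hj.1
      have hcard5c : (Finset.univ.filter (fun j => (¬ j ∈ I) ∧ j ∈ S)).card ≤ sstar := by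
        refine le_trans (Finset.card_le_card ?_) hbhat
        intro j hj
        simp only [Finset.mem_filter, Finset.mem_univ, true_and] at hj
        exact hj.2
      have h := havg (Finset.univ.filter (fun j => (¬ j ∈ I) ∧ j ∈ S))
        (Finset.univ.filter (fun i => ¬ jsel i ∈ S)) hmem5
      have hR0 : (0:ℝ) ≤ ∑ i ∈ Finset.univ.filter (fun i => ¬ jsel i ∈ S),
          (11/10*(b (jsel i))^2 + 44*(nw i)^2) :=
        Finset.sum_nonneg fun i _ => by positivity
      have hA50 : (0:ℝ) ≤ ∑ j ∈ Finset.univ.filter (fun j => (¬ j ∈ I) ∧ j ∈ S), (b j)^2 :=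
        Finset.sum_nonneg fun j _ => sq_nonneg _
      -- kappa facts
      have hs1R : (1:ℝ) ≤ (sstar:ℝ) := by exact_mod_cast hs1
      have hXge : (1:ℝ) ≤ c_u^2/c_l^2 := by
        rw [le_div_iff₀ (by positivity)]
        nlinarith
      have h72' : (s:ℝ) ≥ 72*(c_u^2/c_l^2)*sstar := by
        have : (c_u/c_l)^2 = c_u^2/c_l^2 := by rw [div_pow]
        rw [this] at h72
        exact h72
      have h71 : 71*(c_u^2/c_l^2)*(sstar:ℝ) ≤ (s:ℝ) - sstar := by
        nlinarith [mul_le_mul_of_nonneg_right hXge (le_trans zero_le_one hs1R)]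
      have hsPos : (0:ℝ) < (s:ℝ) - sstar := by
        have : (0:ℝ) < 71*(c_u^2/c_l^2)*(sstar:ℝ) := by positivity
        linarith
      have hss71 : (sstar:ℝ) ≤ c_l^2/(71*c_u^2)*((s:ℝ)-sstar) := by
        calc (sstar:ℝ) = c_l^2/(71*c_u^2)*(71*(c_u^2/c_l^2)*(sstar:ℝ)) := by
              field_simp
          _ ≤ c_l^2/(71*c_u^2)*((s:ℝ)-sstar) :=
              mul_le_mul_of_nonneg_left h71 (by positivity)
      -- chain
      have hQge : ((s:ℝ) - sstar) ≤ ((Finset.univ.filter (fun i => ¬ jsel i ∈ S)).card : ℝ) := by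
        have : (s:ℝ) ≤ ((Finset.univ.filter (fun i => ¬ jsel i ∈ S)).card : ℝ) + sstar := by
          exact_mod_cast hcardQ
        linarith
      have step1 : ((s:ℝ) - sstar) * (∑ j ∈ Finset.univ.filter (fun j => (¬ j ∈ I) ∧ j ∈ S), (b j)^2)
          ≤ ((Finset.univ.filter (fun i => ¬ jsel i ∈ S)).card : ℝ) *
            (∑ j ∈ Finset.univ.filter (fun j => (¬ j ∈ I) ∧ j ∈ S), (b j)^2) :=
        mul_le_mul_of_nonneg_right hQge hA50
      have step2 : ((Finset.univ.filter (fun j => (¬ j ∈ I) ∧ j ∈ S)).card : ℝ) *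
          (∑ i ∈ Finset.univ.filter (fun i => ¬ jsel i ∈ S), (11/10*(b (jsel i))^2 + 44*(nw i)^2))
          ≤ (sstar:ℝ) * (∑ i ∈ Finset.univ.filter (fun i => ¬ jsel i ∈ S),
              (11/10*(b (jsel i))^2 + 44*(nw i)^2)) := by
        apply mul_le_mul_of_nonneg_right _ hR0
        exact_mod_cast hcard5c
      have step3 : (sstar:ℝ) * (∑ i ∈ Finset.univ.filter (fun i => ¬ jsel i ∈ S),
            (11/10*(b (jsel i))^2 + 44*(nw i)^2))
          ≤ (c_l^2/(71*c_u^2)*((s:ℝ)-sstar)) * (∑ i ∈ Finset.univ.filter (fun i => ¬ jsel i ∈ S),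
            (11/10*(b (jsel i))^2 + 44*(nw i)^2)) :=
        mul_le_mul_of_nonneg_right hss71 hR0
      have step4 : ((s:ℝ) - sstar) * (∑ j ∈ Finset.univ.filter (fun j => (¬ j ∈ I) ∧ j ∈ S), (b j)^2)
          ≤ ((s:ℝ) - sstar) * (c_l^2/(71*c_u^2) *
            (∑ i ∈ Finset.univ.filter (fun i => ¬ jsel i ∈ S), (11/10*(b (jsel i))^2 + 44*(nw i)^2))) := by
        have := (step1.trans h).trans (step2.trans step3)
        calc ((s:ℝ) - sstar) * (∑ j ∈ Finset.univ.filter (fun j => (¬ j ∈ I) ∧ j ∈ S), (b j)^2)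
            ≤ (c_l^2/(71*c_u^2)*((s:ℝ)-sstar)) * (∑ i ∈ Finset.univ.filter (fun i => ¬ jsel i ∈ S),
              (11/10*(b (jsel i))^2 + 44*(nw i)^2)) := this
          _ = ((s:ℝ) - sstar) * (c_l^2/(71*c_u^2) *
              (∑ i ∈ Finset.univ.filter (fun i => ¬ jsel i ∈ S), (11/10*(b (jsel i))^2 + 44*(nw i)^2))) := by
              ring
      have step5 := le_of_mul_le_mul_left step4 hsPos
      -- now bound the Q-sum
      have hRsplit : ∑ i ∈ Finset.univ.filter (fun i => ¬ jsel i ∈ S),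
          (11/10*(b (jsel i))^2 + 44*(nw i)^2)
          = 11/10*(∑ i ∈ Finset.univ.filter (fun i => ¬ jsel i ∈ S), (b (jsel i))^2)
            + 44*(∑ i ∈ Finset.univ.filter (fun i => ¬ jsel i ∈ S), nw i ^ 2) := by
        rw [Finset.sum_add_distrib, ← Finset.mul_sum, ← Finset.mul_sum]
      have hQnw : ∑ i ∈ Finset.univ.filter (fun i => ¬ jsel i ∈ S), nw i ^ 2
          ≤ ∑ i, nw i ^ 2 :=
        Finset.sum_le_sum_of_subset_of_nonneg (Finset.filter_subset _ _)
          (fun i _ _ => sq_nonneg _)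
      have hRle : ∑ i ∈ Finset.univ.filter (fun i => ¬ jsel i ∈ S),
          (11/10*(b (jsel i))^2 + 44*(nw i)^2)
          ≤ 11/10*(∑ j ∈ E3, (b j)^2 + ∑ j ∈ E1, (b j)^2) + 44*(∑ i, nw i ^ 2) := by
        rw [hRsplit, hpre5, hIS]
        linarith
      rw [← hE5sum]
      refine step5.trans ?_
      exact mul_le_mul_of_nonneg_left hRle (by positivity)
    -- E3 credit absorbs the kappa^2-scaled claim
    have hCR : 33/3550*(c_l^2/c_u)*(∑ j ∈ E3, (b j)^2)
        ≤ ∑ j ∈ E3, ((G j)^2/(6*c_u) + c_l^2/(48*c_u)*(βt j)^2) := by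
      rw [Finset.mul_sum]
      apply Finset.sum_le_sum
      intro j _
      have h := SE3b hcl hcu (hbj j)
      calc 33/3550*(c_l^2/c_u)*(b j)^2 = (33/3550*c_l^2*(b j)^2)/c_u := by ring
        _ ≤ ((G j)^2/6 + c_l^2/48*(βt j)^2)/c_u := by
            apply div_le_div_of_nonneg_right h h0.le
        _ = (G j)^2/(6*c_u) + c_l^2/(48*c_u)*(βt j)^2 := by ring
    -- final assembly of hMain
    have hquot : c_l^2/c_u ≤ c_u := by
      rw [div_le_iff₀ h0]
      nlinarith
    have m4 := mul_le_mul_of_nonneg_left hA4 (show (0:ℝ) ≤ 9/16*c_u by positivity)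
    have hA5' := mul_le_mul_of_nonneg_left hA5 (show (0:ℝ) ≤ 3/5*c_u by positivity)
    have heq5 : 3/5*c_u*(c_l^2/(71*c_u^2)*(11/10*(∑ j ∈ E3, (b j)^2 + ∑ j ∈ E1, (b j)^2)
          + 44*(∑ i, nw i ^ 2)))
        = 33/3550*((c_l^2/c_u)*(∑ j ∈ E3, (b j)^2)) + 33/3550*((c_l^2/c_u)*(∑ j ∈ E1, (b j)^2))
          + 132/355*((c_l^2/c_u)*(∑ i, nw i ^ 2)) := by
      field_simp
      ring
    rw [heq5] at hA5'
    have hb1nn : (0:ℝ) ≤ ∑ j ∈ E1, (b j)^2 := Finset.sum_nonneg fun j _ => sq_nonneg _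
    have hb2nn : (0:ℝ) ≤ ∑ j ∈ E2, (b j)^2 := Finset.sum_nonneg fun j _ => sq_nonneg _
    have hb3nn : (0:ℝ) ≤ ∑ j ∈ E3, (b j)^2 := Finset.sum_nonneg fun j _ => sq_nonneg _
    have hP1 : (c_l^2/c_u)*(∑ j ∈ E1, (b j)^2) ≤ c_u*(∑ j ∈ E1, (b j)^2) :=
      mul_le_mul_of_nonneg_right hquot hb1nn
    have hPW : (c_l^2/c_u)*(∑ i, nw i ^ 2) ≤ c_u*(∑ i, nw i ^ 2) :=
      mul_le_mul_of_nonneg_right hquot hW0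
    have hVs' : c_u*(∑ j ∈ E2', (wt j)^2) + c_u*(∑ j ∈ E2, (wt j)^2)
        + c_u*(∑ j ∈ E3, (wt j)^2) + c_u*(∑ j ∈ E1, (wt j)^2) = c_u*(∑ j ∈ I, (wt j)^2) := by
      rw [← hVs]; ring
    have hcW : (0:ℝ) ≤ c_u*(∑ i, nw i ^ 2) := mul_nonneg h0.le hW0
    have hcE1 : (0:ℝ) ≤ c_u*(∑ j ∈ E1, (b j)^2) := mul_nonneg h0.le hb1nn
    have hcE2 : (0:ℝ) ≤ c_u*(∑ j ∈ E2, (b j)^2) := mul_nonneg h0.le hb2nn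
    have hcVt : (0:ℝ) ≤ c_u*(∑ j ∈ I, (wt j)^2) :=
      mul_nonneg h0.le (Finset.sum_nonneg fun j _ => sq_nonneg _)
    rw [hsplit_all φ]
    linarith [hB2', hB2, hB3, hB1, hB5T, hB5n, hB4, hB0, m4, hA5', hCR, hP1, hPW,
      hVs', hcW, hcE1, hcE2, hcVt]






  have hφsum : ∑ j, φ j =
      (∑ j, ((βnext j - βt j) * G j + c_u/2*(βnext j - βt j)^2)) +
      c_l/(12*c_u) * ∑ j, ((βt j - βhat j) * G j - c_l/2*(βt j - βhat j)^2) := by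
    rw [Finset.mul_sum, ← Finset.sum_add_distrib]
  have hε : (0:ℝ) < c_l/(12*c_u) := by positivity
  have hmul := mul_le_mul_of_nonneg_left hDD hε.le
  have hW : (∑ i, (⨆ j, |w i j|) ^ 2) = ∑ i, nw i ^ 2 := rfl
  have hWt : (∑ j ∈ Finset.image jsel Finset.univ, (wt j)^2) = ∑ j ∈ I, (wt j)^2 := by
    rw [hIdef]
  rw [hW, hWt]
  have h12 : c_l / (12 * c_u) = c_l/(12*c_u) := by ring
  linarith [hDesc, hmul, hMain, hφsum]
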